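/- Let A be a real n×d matrix, 0 < ε < 1, and let S be a real m×n matrix such that (1 − ε)‖Ax‖₂ ≤ ‖SAx‖₂ ≤ (1 + ε)‖Ax‖₂ for all x ∈ ℝ^d. Let V be a real d×k matrix with orthonormal columns such that SA·VVᵀ is a best rank-k approximation of SA in Frobenius norm, i.e., ‖SA − SA·VVᵀ‖_F ≤ ‖SA − Z‖_F for every m×d matrix Z of rank at most k (this holds when VVᵀ is the projection onto the span of the top k right singular vectors of SA). Then for every n×d matrix Z of rank at most k, ‖A − A·VVᵀ‖_F ≤ ((1 + ε)/(1 − ε))·‖A − Z‖_F. -/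

import Mathlib

open Matrix

/-- The Euclidean norm of a vector in `ℝ^n`. -/
noncomputable def euclNorm {n : ℕ} (x : Fin n → ℝ) : ℝ := Real.sqrt (∑ i, (x i) ^ 2)

/-- The Frobenius norm of a real matrix. -/
noncomputable def frobNorm {m n : ℕ} (M : Matrix (Fin m) (Fin n) ℝ) : ℝ :=
  Real.sqrt (∑ i, ∑ j, (M i j) ^ 2)

lemma euclNorm_nonneg {n : ℕ} (x : Fin n → ℝ) : 0 ≤ euclNorm x := Real.sqrt_nonneg _

lemma euclNorm_sq {n : ℕ} (x : Fin n → ℝ) : euclNorm x ^ 2 = ∑ i, x i ^ 2 :=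
  Real.sq_sqrt (Finset.sum_nonneg fun i _ => sq_nonneg _)

lemma col_mul {a b c : ℕ} (M : Matrix (Fin a) (Fin b) ℝ) (C : Matrix (Fin b) (Fin c) ℝ)
    (j : Fin c) : (fun i => (M * C) i j) = M.mulVec (fun l => C l j) := by
  ext i; simp [Matrix.mul_apply, Matrix.mulVec, dotProduct]

lemma frob_le_of_cols {a a' b : ℕ} (M : Matrix (Fin a) (Fin b) ℝ) (N : Matrix (Fin a') (Fin b) ℝ)
    (c : ℝ) (hc : 0 ≤ c)
    (h : ∀ j, ∑ i, (M i j) ^ 2 ≤ c ^ 2 * ∑ i, (N i j) ^ 2) : frobNorm M ≤ c * frobNorm N := by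
  unfold frobNorm
  rw [Finset.sum_comm, Finset.sum_comm (f := fun i j => (N i j) ^ 2)]
  have hsum : ∑ j, ∑ i, (M i j) ^ 2 ≤ c ^ 2 * ∑ j, ∑ i, (N i j) ^ 2 := by
    rw [Finset.mul_sum]
    exact Finset.sum_le_sum fun j _ => h j
  calc Real.sqrt (∑ j, ∑ i, (M i j) ^ 2)
      ≤ Real.sqrt (c ^ 2 * ∑ j, ∑ i, (N i j) ^ 2) := Real.sqrt_le_sqrt hsum
    _ = c * Real.sqrt (∑ j, ∑ i, (N i j) ^ 2) := by
        rw [Real.sqrt_mul (sq_nonneg c), Real.sqrt_sq hc]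

/-- if `S` is an ℓ₂-subspace embedding for `A` and `V Vᵀ` projects onto
the span of the top `k` right singular vectors of `SA` (i.e., `SA·VVᵀ` is a best
rank-`k` approximation to `SA`), then `A·VVᵀ` is a `(1+ε)/(1−ε)`-approximate best
rank-`k` approximation to `A` in Frobenius norm. -/
theorem stmt11 {n d m k : ℕ} (A : Matrix (Fin n) (Fin d) ℝ)
    (ε : ℝ) (hε0 : 0 < ε) (hε1 : ε < 1)
    (S : Matrix (Fin m) (Fin n) ℝ)
    (hS : ∀ x : Fin d → ℝ,
      (1 - ε) * euclNorm (A.mulVec x) ≤ euclNorm ((S * A).mulVec x) ∧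
      euclNorm ((S * A).mulVec x) ≤ (1 + ε) * euclNorm (A.mulVec x))
    (V : Matrix (Fin d) (Fin k) ℝ) (hV : Vᵀ * V = 1)
    (hVopt : ∀ Z : Matrix (Fin m) (Fin d) ℝ, Z.rank ≤ k →
      frobNorm (S * A - S * A * (V * Vᵀ)) ≤ frobNorm (S * A - Z)) :
    ∀ Z : Matrix (Fin n) (Fin d) ℝ, Z.rank ≤ k →
      frobNorm (A - A * (V * Vᵀ)) ≤ ((1 + ε) / (1 - ε)) * frobNorm (A - Z) := by
  intro Z hZ
  have h1 : (0:ℝ) < 1 - ε := by linarith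
  have h2 : (0:ℝ) < 1 + ε := by linarith
  -- squared subspace embedding bounds
  have hSup : ∀ x : Fin d → ℝ,
      ∑ i, ((S * A).mulVec x i) ^ 2 ≤ (1 + ε) ^ 2 * ∑ i, (A.mulVec x i) ^ 2 := by
    intro x
    have h := (hS x).2
    have h0 : 0 ≤ euclNorm ((S * A).mulVec x) := euclNorm_nonneg _
    have h' := pow_le_pow_left₀ h0 h 2
    rw [mul_pow, euclNorm_sq, euclNorm_sq] at h'
    exact h'
  have hSdown : ∀ x : Fin d → ℝ,
      ∑ i, (A.mulVec x i) ^ 2 ≤ (1 / (1 - ε)) ^ 2 * ∑ i, ((S * A).mulVec x i) ^ 2 := by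
    intro x
    have h := (hS x).1
    have h0 : 0 ≤ euclNorm (A.mulVec x) := euclNorm_nonneg _
    have hle : euclNorm (A.mulVec x) ≤ (1 / (1 - ε)) * euclNorm ((S * A).mulVec x) := by
      rw [div_mul_eq_mul_div, one_mul, le_div_iff₀ h1]
      nlinarith [h]
    have h' := pow_le_pow_left₀ h0 hle 2
    rw [mul_pow, euclNorm_sq, euclNorm_sq] at h'
    exact h'
  -- projection onto the column space of A
  set lmap : (Fin d → ℝ) →ₗ[ℝ] EuclideanSpace ℝ (Fin n) :=
    { toFun := fun w => WithLp.toLp 2 (A.mulVec w)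
      map_add' := fun x y => by simp [A.mulVec_add x y]
      map_smul' := fun c x => by simp [A.mulVec_smul c x] } with hlmap
  set K : Submodule ℝ (EuclideanSpace ℝ (Fin n)) := LinearMap.range lmap with hK
  set proj : EuclideanSpace ℝ (Fin n) →ₗ[ℝ] EuclideanSpace ℝ (Fin n) :=
    K.subtype ∘ₗ (K.orthogonalProjectionOnto).toLinearMap with hproj
  have hproj_mem : ∀ v, proj v ∈ K := fun v => (K.orthogonalProjectionOnto v).2
  have hproj_id : ∀ v, v ∈ K → proj v = v := by
    intro v hv
    have := Submodule.orthogonalProjectionOnto_mem_subspace_eq_self (K := K) ⟨v, hv⟩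
    simpa [hproj] using congrArg Subtype.val this
  have hproj_norm : ∀ v : EuclideanSpace ℝ (Fin n), ‖proj v‖ ≤ ‖v‖ := by
    intro v
    have h1' : ‖proj v‖ = ‖K.orthogonalProjectionOnto v‖ := rfl
    rw [h1']
    calc ‖K.orthogonalProjectionOnto v‖ ≤ ‖K.orthogonalProjectionOnto‖ * ‖v‖ :=
          (K.orthogonalProjectionOnto).le_opNorm v
      _ ≤ 1 * ‖v‖ := by
          exact mul_le_mul_of_nonneg_right (Submodule.orthogonalProjectionOnto_norm_le K) (norm_nonneg v)
      _ = ‖v‖ := one_mul _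
  have hproj_sum : ∀ v : Fin n → ℝ, ∑ i, (proj (WithLp.toLp 2 v) i) ^ 2 ≤ ∑ i, (v i) ^ 2 := by
    intro v
    have h := hproj_norm (WithLp.toLp 2 v)
    have h' := pow_le_pow_left₀ (norm_nonneg _) h 2
    rw [EuclideanSpace.norm_eq, EuclideanSpace.norm_eq,
      Real.sq_sqrt (Finset.sum_nonneg fun i _ => sq_nonneg _),
      Real.sq_sqrt (Finset.sum_nonneg fun i _ => sq_nonneg _)] at h'
    simpa [Real.norm_eq_abs, sq_abs] using h'
  -- the projection as a matrix
  set P : Matrix (Fin n) (Fin n) ℝ := LinearMap.toMatrix' ((WithLp.linearEquiv 2 ℝ (Fin n → ℝ)).toLinearMap ∘ₗ proj ∘ₗ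
    (WithLp.linearEquiv 2 ℝ (Fin n → ℝ)).symm.toLinearMap) with hP
  have hPmul : ∀ v : Fin n → ℝ, P.mulVec v = (proj (WithLp.toLp 2 v)).ofLp := by
    intro v
    rw [← Matrix.toLin'_apply, hP, Matrix.toLin'_toMatrix']
    rfl
  -- columns of A lie in K
  have hcolA : ∀ j, WithLp.toLp 2 (fun i => A i j) ∈ K := by
    intro j
    refine ⟨Pi.single j 1, ?_⟩
    show WithLp.toLp 2 (A.mulVec (Pi.single j 1)) = _
    congr 1
    ext i
    simp [Matrix.mulVec, dotProduct, Pi.single_apply, Finset.sum_ite_eq']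
  -- column of P*Z is proj of column of Z
  have hPZcol : ∀ j i, (P * Z) i j = proj (WithLp.toLp 2 (fun l => Z l j)) i := by
    intro j i
    rw [← hPmul]
    simp [Matrix.mul_apply, Matrix.mulVec, dotProduct]
  have hrank : (S * (P * Z)).rank ≤ k :=
    le_trans (le_trans (Matrix.rank_mul_le_right S (P * Z))
      (Matrix.rank_mul_le_right P Z)) hZ
  set C : Matrix (Fin d) (Fin d) ℝ := 1 - V * Vᵀ with hC
  have hAC : A - A * (V * Vᵀ) = A * C := by rw [hC, Matrix.mul_sub, Matrix.mul_one]
  have hSAC : S * A - S * A * (V * Vᵀ) = (S * A) * C := by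
    rw [hC, Matrix.mul_sub, Matrix.mul_one, Matrix.mul_assoc]
  -- step 1
  have step1 : frobNorm (A * C) ≤ (1 / (1 - ε)) * frobNorm ((S * A) * C) := by
    apply frob_le_of_cols _ _ _ (by positivity)
    intro j
    have e1 : ∀ i, (A * C) i j = A.mulVec (fun l => C l j) i :=
      fun i => congrFun (col_mul A C j) i
    have e2 : ∀ i, ((S * A) * C) i j = (S * A).mulVec (fun l => C l j) i :=
      fun i => congrFun (col_mul (S * A) C j) i
    simp only [e1, e2]
    exact hSdown _
  -- step 2
  have step2 : frobNorm (S * A - S * A * (V * Vᵀ)) ≤ frobNorm (S * A - S * (P * Z)) :=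
    hVopt (S * (P * Z)) hrank
  -- step 3
  have step3 : frobNorm (S * (A - P * Z)) ≤ (1 + ε) * frobNorm (A - P * Z) := by
    apply frob_le_of_cols _ _ _ (le_of_lt h2)
    intro j
    obtain ⟨w, hw⟩ : (WithLp.toLp 2 (fun i => (A - P * Z) i j) : EuclideanSpace ℝ (Fin n)) ∈ K := by
      have hmem := K.sub_mem (hcolA j)
        (hproj_mem (WithLp.toLp 2 (fun l => Z l j) : EuclideanSpace ℝ (Fin n)))
      have e : (WithLp.toLp 2 (fun i => (A - P * Z) i j) : EuclideanSpace ℝ (Fin n)) =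
          Sub.sub (α := EuclideanSpace ℝ (Fin n)) (WithLp.toLp 2 (fun i => A i j))
            (proj (WithLp.toLp 2 (fun l => Z l j))) := by
        ext i
        show A i j - (P * Z) i j = A i j - proj (WithLp.toLp 2 (fun l => Z l j)) i
        rw [hPZcol j i]
      rw [e]
      exact hmem
    have hw' : A.mulVec w = fun i => (A - P * Z) i j := congrArg WithLp.ofLp hw
    have e1 : ∀ i, (S * (A - P * Z)) i j = (S * A).mulVec w i := by
      intro i
      have := congrFun (col_mul S (A - P * Z) j) i
      rw [this, ← hw', ← Matrix.mulVec_mulVec]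
    have e2 : ∀ i, (A - P * Z) i j = A.mulVec w i := fun i => (congrFun hw' i).symm
    simp only [e1, e2]
    exact hSup w
  -- step 4
  have step4 : frobNorm (A - P * Z) ≤ 1 * frobNorm (A - Z) := by
    apply frob_le_of_cols _ _ _ zero_le_one
    intro j
    have ems : proj (WithLp.toLp 2 (fun i => (A - Z) i j) : EuclideanSpace ℝ (Fin n)) =
        proj (WithLp.toLp 2 (fun i => A i j) : EuclideanSpace ℝ (Fin n)) -
          proj (WithLp.toLp 2 (fun l => Z l j) : EuclideanSpace ℝ (Fin n)) := by
      rw [← map_sub]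
      congr 1
    have eid := hproj_id _ (hcolA j)
    have key : ∀ i, (A - P * Z) i j =
        proj (WithLp.toLp 2 (fun i' => (A - Z) i' j) : EuclideanSpace ℝ (Fin n)) i := by
      intro i
      rw [ems, eid]
      show A i j - (P * Z) i j = A i j - proj (WithLp.toLp 2 (fun l => Z l j)) i
      rw [hPZcol j i]
    simp only [key, one_pow, one_mul]
    exact hproj_sum (fun i' => (A - Z) i' j)
  -- combine
  have hnn : (0:ℝ) ≤ 1 / (1 - ε) := by positivity
  calc frobNorm (A - A * (V * Vᵀ)) = frobNorm (A * C) := by rw [hAC]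
    _ ≤ (1 / (1 - ε)) * frobNorm ((S * A) * C) := step1
    _ = (1 / (1 - ε)) * frobNorm (S * A - S * A * (V * Vᵀ)) := by rw [hSAC]
    _ ≤ (1 / (1 - ε)) * frobNorm (S * A - S * (P * Z)) :=
        mul_le_mul_of_nonneg_left step2 hnn
    _ = (1 / (1 - ε)) * frobNorm (S * (A - P * Z)) := by rw [Matrix.mul_sub]
    _ ≤ (1 / (1 - ε)) * ((1 + ε) * frobNorm (A - P * Z)) :=
        mul_le_mul_of_nonneg_left step3 hnn
    _ ≤ (1 / (1 - ε)) * ((1 + ε) * (1 * frobNorm (A - Z))) := by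
        apply mul_le_mul_of_nonneg_left _ hnn
        exact mul_le_mul_of_nonneg_left step4 (le_of_lt h2)
    _ = ((1 + ε) / (1 - ε)) * frobNorm (A - Z) := by ring
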